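/- Let X₁, …, X_n be a martingale difference sequence of random vectors in ℝ^d (i.e., E[X_t | F_{t−1}] = 0) with ‖X_t‖₂ ≤ 2R almost surely for all t. Then for all δ ∈ (0,1), with probability at least 1 − δ, ‖(1/n) Σ_{t=1}^n X_t‖₂ ≤ 4R √(ln(2/δ)/n). -/

import Mathlib

open MeasureTheory
open scoped BigOperators


lemma aux_sinh_le_mul_cosh {t : ℝ} (ht : 0 ≤ t) : Real.sinh t ≤ t * Real.cosh t := by
  have hd : ∀ x : ℝ, HasDerivAt (fun s => s * Real.cosh s - Real.sinh s) (x * Real.sinh x) x := by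
    intro x
    have h1 := ((hasDerivAt_id x).mul (Real.hasDerivAt_cosh x)).sub (Real.hasDerivAt_sinh x)
    refine h1.congr_deriv ?_
    simp only [id_eq]
    ring
  have hmono : Monotone (fun s : ℝ => s * Real.cosh s - Real.sinh s) := by
    apply monotone_of_deriv_nonneg
    · exact fun x => (hd x).differentiableAt
    · intro x
      rw [(hd x).deriv]
      rcases le_or_gt 0 x with h | h
      · exact mul_nonneg h (Real.sinh_nonneg_iff.2 h)
      · have h2 : Real.sinh x ≤ 0 := by simpa using Real.sinh_le_sinh.2 h.le
        nlinarith
  have h3 := hmono ht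
  simp only [Real.cosh_zero, Real.sinh_zero, zero_mul, sub_zero] at h3
  linarith

lemma aux_cosh_le_exp_sq (t : ℝ) : Real.cosh t ≤ Real.exp (t ^ 2 / 2) := by
  have key : ∀ s : ℝ, 0 ≤ s → Real.cosh s ≤ Real.exp (s ^ 2 / 2) := by
    intro s hs
    have hd : ∀ x : ℝ, HasDerivAt (fun u => u ^ 2 / 2 - Real.log (Real.cosh u))
        (x - Real.sinh x / Real.cosh x) x := by
      intro x
      have h1 : HasDerivAt (fun u : ℝ => u ^ 2 / 2) x x := by
        have := (hasDerivAt_pow 2 x).div_const 2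
        simpa using this
      have h2 : HasDerivAt (fun u : ℝ => Real.log (Real.cosh u))
          (Real.sinh x / Real.cosh x) x :=
        (Real.hasDerivAt_cosh x).log (Real.cosh_pos x).ne'
      exact h1.sub h2
    have hmono : MonotoneOn (fun u : ℝ => u ^ 2 / 2 - Real.log (Real.cosh u)) (Set.Ici 0) := by
      apply monotoneOn_of_deriv_nonneg (convex_Ici 0)
      · exact Continuous.continuousOn
          (((continuous_pow 2).div_const 2).sub
            (Real.continuous_cosh.log (fun x => (Real.cosh_pos x).ne')))
      · exact fun x _ => (hd x).differentiableAt.differentiableWithinAt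
      · intro x hx
        rw [interior_Ici] at hx
        rw [(hd x).deriv]
        have : Real.sinh x / Real.cosh x ≤ x := by
          rw [div_le_iff₀ (Real.cosh_pos x)]
          exact aux_sinh_le_mul_cosh hx.le
        linarith
    have h0 := hmono (Set.self_mem_Ici) (by exact hs) hs
    simp only [Real.cosh_zero, Real.log_one] at h0
    have hlog : Real.log (Real.cosh s) ≤ s ^ 2 / 2 := by
      simp only [ne_eq, OfNat.ofNat_ne_zero, not_false_eq_true, zero_pow, zero_div,
        sub_zero] at h0
      linarith
    calc Real.cosh s = Real.exp (Real.log (Real.cosh s)) :=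
          (Real.exp_log (Real.cosh_pos s)).symm
      _ ≤ Real.exp (s ^ 2 / 2) := Real.exp_le_exp.2 hlog
  rcases le_or_gt 0 t with h | h
  · exact key t h
  · have := key (-t) (by linarith)
    simpa [Real.cosh_neg] using this

lemma aux_convexOn_cosh_sqrt : ConvexOn ℝ (Set.Ici (0:ℝ)) (fun u => Real.cosh (Real.sqrt u)) := by
  apply convexOn_of_hasDerivWithinAt2_nonneg (convex_Ici 0)
    (f' := fun u => Real.sinh (Real.sqrt u) / (2 * Real.sqrt u))
    (f'' := fun u => (Real.cosh (Real.sqrt u) - Real.sinh (Real.sqrt u) / Real.sqrt u) / (4 * u))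
  · exact (Real.continuous_cosh.comp Real.continuous_sqrt).continuousOn
  · intro x hx
    rw [interior_Ici] at hx
    have hx0 : (0:ℝ) < x := hx
    have hs : HasDerivAt (fun u : ℝ => Real.sqrt u) (1 / (2 * Real.sqrt x)) x :=
      Real.hasDerivAt_sqrt hx0.ne'
    have h := (Real.hasDerivAt_cosh (Real.sqrt x)).comp x hs
    have heq : Real.sinh (Real.sqrt x) * (1 / (2 * Real.sqrt x))
        = Real.sinh (Real.sqrt x) / (2 * Real.sqrt x) := by ring
    rw [heq] at h
    exact h.hasDerivWithinAt
  · intro x hx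
    rw [interior_Ici] at hx
    have hx0 : (0:ℝ) < x := hx
    have hsq : (0:ℝ) < Real.sqrt x := Real.sqrt_pos.2 hx0
    have hs : HasDerivAt (fun u : ℝ => Real.sqrt u) (1 / (2 * Real.sqrt x)) x :=
      Real.hasDerivAt_sqrt hx0.ne'
    have hnum : HasDerivAt (fun u : ℝ => Real.sinh (Real.sqrt u))
        (Real.cosh (Real.sqrt x) * (1 / (2 * Real.sqrt x))) x :=
      (Real.hasDerivAt_sinh (Real.sqrt x)).comp x hs
    have hden : HasDerivAt (fun u : ℝ => 2 * Real.sqrt u) (2 * (1 / (2 * Real.sqrt x))) x :=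
      hs.const_mul 2
    have hden0 : (2 : ℝ) * Real.sqrt x ≠ 0 := by positivity
    have h := hnum.div hden hden0
    have hs0 : Real.sqrt x ≠ 0 := ne_of_gt hsq
    have hs2 : Real.sqrt x ^ 2 = x := Real.sq_sqrt hx0.le
    have heq : (Real.cosh (Real.sqrt x) * (1 / (2 * Real.sqrt x)) * (2 * Real.sqrt x) -
        Real.sinh (Real.sqrt x) * (2 * (1 / (2 * Real.sqrt x)))) / (2 * Real.sqrt x) ^ 2
        = (Real.cosh (Real.sqrt x) - Real.sinh (Real.sqrt x) / Real.sqrt x) / (4 * x) := by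
      field_simp
      linear_combination (Real.sinh (Real.sqrt x) * 4 - Real.cosh (Real.sqrt x) * 4 * Real.sqrt x) * hs2
    rw [heq] at h
    exact h.hasDerivWithinAt
  · intro x hx
    rw [interior_Ici] at hx
    have hx0 : (0:ℝ) < x := hx
    have hsq : (0:ℝ) < Real.sqrt x := Real.sqrt_pos.2 hx0
    have h1 : Real.sinh (Real.sqrt x) / Real.sqrt x ≤ Real.cosh (Real.sqrt x) := by
      rw [div_le_iff₀ hsq]
      have := aux_sinh_le_mul_cosh hsq.le
      linarith
    have h2 : (0:ℝ) ≤ Real.cosh (Real.sqrt x) - Real.sinh (Real.sqrt x) / Real.sqrt x := by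
      linarith
    positivity

lemma aux_key_pointwise {E : Type*} [NormedAddCommGroup E] [InnerProductSpace ℝ E]
    (lam c : ℝ) (hlam : 0 ≤ lam) (x v : E) (hv : ‖v‖ ≤ c) :
    Real.cosh (lam * ‖x + v‖) ≤ Real.cosh (lam * ‖x‖) * Real.cosh (lam * c)
      + Real.sinh (lam * ‖x‖) * Real.sinh (lam * c) / (‖x‖ * c) * (inner ℝ x v : ℝ) := by
  have hc0 : 0 ≤ c := le_trans (norm_nonneg v) hv
  rcases eq_or_lt_of_le hc0 with hc | hc
  · -- c = 0, so v = 0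
    have hv0 : v = 0 := norm_le_zero_iff.1 (by rw [← hc] at hv; exact hv)
    subst hv0
    simp [← hc]
  rcases eq_or_lt_of_le (norm_nonneg x) with hx | hx
  · -- x = 0
    have hx0 : x = 0 := norm_eq_zero.1 hx.symm
    subst hx0
    simp only [norm_zero, mul_zero, Real.sinh_zero, zero_mul, zero_div, zero_add,
      Real.cosh_zero, one_mul, inner_zero_left, mul_zero, add_zero]
    exact Real.cosh_le_cosh.2 (by
      rw [abs_of_nonneg (mul_nonneg hlam (norm_nonneg _)), abs_of_nonneg (mul_nonneg hlam hc0)]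
      exact mul_le_mul_of_nonneg_left hv hlam)
  · -- main case: ‖x‖ > 0, c > 0
    set a := ‖x‖ with ha
    set b : ℝ := inner ℝ x v with hb
    have hab : |b| ≤ a * c := by
      calc |b| ≤ ‖x‖ * ‖v‖ := abs_real_inner_le_norm x v
        _ ≤ a * c := by exact mul_le_mul_of_nonneg_left hv (norm_nonneg x)
    have hac : 0 < a * c := mul_pos hx hc
    set g : ℝ → ℝ := fun u => Real.cosh (Real.sqrt u) with hg
    -- step 1 : cosh (lam ‖x+v‖) = g (lam^2 * ‖x+v‖^2)
    have hsq : ∀ s : ℝ, 0 ≤ s → g (lam ^ 2 * s ^ 2) = Real.cosh (lam * s) := by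
      intro s hs
      have : Real.sqrt (lam ^ 2 * s ^ 2) = lam * s := by
        rw [show lam ^ 2 * s ^ 2 = (lam * s) ^ 2 by ring]
        exact Real.sqrt_sq (mul_nonneg hlam hs)
      simp only [hg, this]
    have h1 : Real.cosh (lam * ‖x + v‖) = g (lam ^ 2 * ‖x + v‖ ^ 2) :=
      (hsq _ (norm_nonneg _)).symm
    -- step 2 : monotonicity in ‖v‖² ≤ c²
    have hexp : ‖x + v‖ ^ 2 = a ^ 2 + 2 * b + ‖v‖ ^ 2 := norm_add_sq_real x v
    have hmono : g (lam ^ 2 * ‖x + v‖ ^ 2) ≤ g (lam ^ 2 * (a ^ 2 + 2 * b + c ^ 2)) := by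
      apply Real.cosh_le_cosh.2
      rw [abs_of_nonneg (Real.sqrt_nonneg _), abs_of_nonneg (Real.sqrt_nonneg _)]
      apply Real.sqrt_le_sqrt
      rw [hexp]
      have : ‖v‖ ^ 2 ≤ c ^ 2 := by nlinarith [norm_nonneg v]
      nlinarith [sq_nonneg lam]
    -- step 3 : convexity
    have hmem1 : lam ^ 2 * (a - c) ^ 2 ∈ Set.Ici (0:ℝ) := Set.mem_Ici.2 (by positivity)
    have hmem2 : lam ^ 2 * (a + c) ^ 2 ∈ Set.Ici (0:ℝ) := Set.mem_Ici.2 (by positivity)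
    set θ : ℝ := (a * c + b) / (2 * (a * c)) with hθ
    have hθ0 : 0 ≤ θ := by
      apply div_nonneg _ (by positivity)
      have := abs_le.1 hab
      linarith [this.1]
    have hθ1 : 0 ≤ 1 - θ := by
      have h2 : θ ≤ 1 := by
        rw [hθ, div_le_one (by positivity)]
        have := abs_le.1 hab
        linarith [this.2]
      linarith
    have hcomb : lam ^ 2 * (a ^ 2 + 2 * b + c ^ 2)
        = (1 - θ) • (lam ^ 2 * (a - c) ^ 2) + θ • (lam ^ 2 * (a + c) ^ 2) := by
      simp only [smul_eq_mul, hθ]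
      field_simp
      ring
    have hconv := aux_convexOn_cosh_sqrt.2 hmem1 hmem2 hθ1 hθ0 (by ring)
    rw [← hcomb] at hconv
    -- step 4 : evaluate endpoints
    have he1 : g (lam ^ 2 * (a - c) ^ 2) = Real.cosh (lam * a - lam * c) := by
      have : Real.sqrt (lam ^ 2 * (a - c) ^ 2) = |lam * (a - c)| := by
        rw [show lam ^ 2 * (a - c) ^ 2 = (lam * (a - c)) ^ 2 by ring]
        exact Real.sqrt_sq_eq_abs _
      simp only [hg]
      rw [this, Real.cosh_abs, mul_sub]
    have he2 : g (lam ^ 2 * (a + c) ^ 2) = Real.cosh (lam * a + lam * c) := by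
      have : Real.sqrt (lam ^ 2 * (a + c) ^ 2) = |lam * (a + c)| := by
        rw [show lam ^ 2 * (a + c) ^ 2 = (lam * (a + c)) ^ 2 by ring]
        exact Real.sqrt_sq_eq_abs _
      simp only [hg]
      rw [this, Real.cosh_abs, mul_add]
    -- put together
    have final : (1 - θ) * Real.cosh (lam * a - lam * c) + θ * Real.cosh (lam * a + lam * c)
        = Real.cosh (lam * a) * Real.cosh (lam * c)
          + Real.sinh (lam * a) * Real.sinh (lam * c) / (a * c) * b := by
      rw [Real.cosh_sub, Real.cosh_add, hθ]
      field_simp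
      ring
    calc Real.cosh (lam * ‖x + v‖) = g (lam ^ 2 * ‖x + v‖ ^ 2) := h1
      _ ≤ g (lam ^ 2 * (a ^ 2 + 2 * b + c ^ 2)) := hmono
      _ ≤ (1 - θ) • g (lam ^ 2 * (a - c) ^ 2) + θ • g (lam ^ 2 * (a + c) ^ 2) := hconv
      _ = Real.cosh (lam * a) * Real.cosh (lam * c)
          + Real.sinh (lam * a) * Real.sinh (lam * c) / (a * c) * b := by
        rw [smul_eq_mul, smul_eq_mul, he1, he2, final]

lemma aux_condexp_coord {Ω : Type*} {m : MeasurableSpace Ω} {m0 : MeasurableSpace Ω}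
    (hm : m ≤ m0) (μ : Measure Ω) [IsProbabilityMeasure μ] {d : ℕ}
    (X : Ω → EuclideanSpace ℝ (Fin d)) (hX : Integrable X μ)
    (h0 : μ[X | m] =ᵐ[μ] 0) (i : Fin d) :
    μ[fun ω => X ω i | m] =ᵐ[μ] 0 := by
  have hXi : Integrable (fun ω => X ω i) μ :=
    ContinuousLinearMap.integrable_comp (EuclideanSpace.proj (𝕜 := ℝ) i) hX
  symm
  apply ae_eq_condExp_of_forall_setIntegral_eq hm hXi
  · intro s _ _
    exact integrableOn_zero
  · intro s hs hμs
    have hs0 : MeasurableSet[m0] s := hm s hs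
    have hint : ∫ ω in s, X ω ∂μ = 0 := by
      have h1 : ∫ ω in s, (μ[X|m]) ω ∂μ = ∫ ω in s, X ω ∂μ := setIntegral_condExp hm hX hs
      have h2 : ∫ ω in s, (μ[X|m]) ω ∂μ = 0 := by
        rw [setIntegral_congr_ae hs0 (h0.mono fun ω hω _ => hω)]
        simp
      rw [← h1, h2]
    have h3 : ∫ ω in s, X ω i ∂μ = (EuclideanSpace.proj (𝕜 := ℝ) i) (∫ ω in s, X ω ∂μ) :=
      by
        rw [← ContinuousLinearMap.integral_comp_comm (EuclideanSpace.proj (𝕜 := ℝ) i) hX.integrableOn]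
        rfl
    rw [h3, hint]
    simp
  · exact stronglyMeasurable_zero.aestronglyMeasurable

lemma aux_abs_coord {d : ℕ} (x : EuclideanSpace ℝ (Fin d)) (i : Fin d) : |x i| ≤ ‖x‖ := by
  rw [EuclideanSpace.norm_eq, show |x i| = Real.sqrt ((x i)^2) from (Real.sqrt_sq_eq_abs _).symm]
  apply Real.sqrt_le_sqrt
  have := Finset.single_le_sum (f := fun j => ‖x j‖^2) (fun j _ => sq_nonneg _) (Finset.mem_univ i)
  simpa [sq_abs] using this

lemma aux_step {Ω : Type*} {m : MeasurableSpace Ω} {m0 : MeasurableSpace Ω}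
    (hm : m ≤ m0) (μ : Measure Ω) [IsProbabilityMeasure μ] {d : ℕ}
    (Y V : Ω → EuclideanSpace ℝ (Fin d))
    (hY : StronglyMeasurable[m] Y) (hVm : AEStronglyMeasurable V μ)
    (lam c A : ℝ) (hlam : 0 ≤ lam) (hc : 0 < c) (hA : 0 ≤ A)
    (hYb : ∀ᵐ ω ∂μ, ‖Y ω‖ ≤ A) (hVb : ∀ᵐ ω ∂μ, ‖V ω‖ ≤ c)
    (hmart : μ[V | m] =ᵐ[μ] 0) :
    ∫ ω, Real.cosh (lam * ‖Y ω + V ω‖) ∂μ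
      ≤ Real.cosh (lam * c) * ∫ ω, Real.cosh (lam * ‖Y ω‖) ∂μ := by
  have hYm0 : AEStronglyMeasurable Y μ := (hY.mono hm).aestronglyMeasurable
  have hV_int : Integrable V μ := Integrable.mono' (integrable_const c) hVm hVb
  have hnorm : Measurable[m] fun ω => ‖Y ω‖ := hY.norm.measurable
  -- the correction term
  set κ : Ω → ℝ := fun ω =>
    Real.sinh (lam * ‖Y ω‖) * Real.sinh (lam * c) / (‖Y ω‖ * c) with hκ
  have hκSM : StronglyMeasurable[m] κ := by
    apply Measurable.stronglyMeasurable
    exact ((Real.continuous_sinh.measurable.comp (hnorm.const_mul lam)).mul_const _).div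
      (hnorm.mul_const c)
  set W : Ω → ℝ := fun ω => κ ω * (inner ℝ (Y ω) (V ω) : ℝ) with hW
  set B : ℝ := Real.sinh (lam * A) * Real.sinh (lam * c) / c with hB
  have hB0 : 0 ≤ B := by
    apply div_nonneg _ hc.le
    exact mul_nonneg (Real.sinh_nonneg_iff.2 (by positivity)) (Real.sinh_nonneg_iff.2 (by positivity))
  -- bound on κ times ‖Y‖ : key scalar bound
  have hκY : ∀ ω, ‖Y ω‖ ≤ A → |κ ω| * ‖Y ω‖ ≤ B := by
    intro ω hω
    rcases eq_or_lt_of_le (norm_nonneg (Y ω)) with h0 | h0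
    · simp [hκ, ← h0]
      positivity
    · have ha : (0:ℝ) < ‖Y ω‖ := h0
      have hκval : |κ ω| = Real.sinh (lam * ‖Y ω‖) * Real.sinh (lam * c) / (‖Y ω‖ * c) := by
        rw [hκ]
        rw [abs_of_nonneg]
        apply div_nonneg _ (by positivity)
        exact mul_nonneg (Real.sinh_nonneg_iff.2 (by positivity))
          (Real.sinh_nonneg_iff.2 (by positivity))
      rw [hκval, hB]
      rw [div_mul_eq_mul_div, div_le_div_iff₀ (by positivity) hc]
      have hs : Real.sinh (lam * ‖Y ω‖) ≤ Real.sinh (lam * A) :=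
        Real.sinh_le_sinh.2 (mul_le_mul_of_nonneg_left hω hlam)
      have hs2 : 0 ≤ Real.sinh (lam * c) := Real.sinh_nonneg_iff.2 (by positivity)
      have hs3 : 0 ≤ Real.sinh (lam * ‖Y ω‖) := Real.sinh_nonneg_iff.2 (by positivity)
      calc Real.sinh (lam * ‖Y ω‖) * Real.sinh (lam * c) * ‖Y ω‖ * c
          ≤ Real.sinh (lam * A) * Real.sinh (lam * c) * ‖Y ω‖ * c := by
            apply mul_le_mul_of_nonneg_right _ hc.le
            apply mul_le_mul_of_nonneg_right _ (norm_nonneg _)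
            exact mul_le_mul_of_nonneg_right hs hs2
        _ = Real.sinh (lam * A) * Real.sinh (lam * c) * (‖Y ω‖ * c) := by ring
  -- coordinate functions
  have hfSM : ∀ i : Fin d, StronglyMeasurable[m] (fun ω => κ ω * Y ω i) := by
    intro i
    apply hκSM.mul
    apply Measurable.stronglyMeasurable
    exact (EuclideanSpace.proj (𝕜 := ℝ) i).continuous.measurable.comp hY.measurable
  have hfb : ∀ i : Fin d, ∀ᵐ ω ∂μ, ‖κ ω * Y ω i‖ ≤ B := by
    intro i
    filter_upwards [hYb] with ω hω
    rw [Real.norm_eq_abs, abs_mul]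
    calc |κ ω| * |Y ω i| ≤ |κ ω| * ‖Y ω‖ :=
          mul_le_mul_of_nonneg_left (aux_abs_coord _ i) (abs_nonneg _)
      _ ≤ B := hκY ω hω
  have hg_int : ∀ i : Fin d, Integrable (fun ω => V ω i) μ :=
    fun i => ContinuousLinearMap.integrable_comp (EuclideanSpace.proj (𝕜 := ℝ) i) hV_int
  -- each coordinate product has zero integral
  have hzero : ∀ i : Fin d, ∫ ω, κ ω * Y ω i * V ω i ∂μ = 0 := by
    intro i
    have h1 : μ[(fun ω => κ ω * Y ω i) * (fun ω => V ω i) | m]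
        =ᵐ[μ] (fun ω => κ ω * Y ω i) * μ[(fun ω => V ω i) | m] :=
      condExp_stronglyMeasurable_mul_of_bound hm (hfSM i) (hg_int i) B (hfb i)
    have h2 : μ[(fun ω => V ω i) | m] =ᵐ[μ] 0 := aux_condexp_coord hm μ V hV_int hmart i
    have h3 : μ[(fun ω => κ ω * Y ω i) * (fun ω => V ω i) | m] =ᵐ[μ] 0 := by
      refine h1.trans ?_
      filter_upwards [h2] with ω hω
      simp [hω]
    have h4 : ∫ ω, ((fun ω => κ ω * Y ω i) * (fun ω => V ω i)) ω ∂μ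
        = ∫ ω, (μ[(fun ω => κ ω * Y ω i) * (fun ω => V ω i) | m]) ω ∂μ :=
      (integral_condExp hm).symm
    have h5 : ∫ ω, (μ[(fun ω => κ ω * Y ω i) * (fun ω => V ω i) | m]) ω ∂μ = 0 := by
      rw [integral_congr_ae h3]
      simp
    calc ∫ ω, κ ω * Y ω i * V ω i ∂μ
        = ∫ ω, ((fun ω => κ ω * Y ω i) * (fun ω => V ω i)) ω ∂μ := rfl
      _ = 0 := by rw [h4, h5]
  -- W has zero integral
  have hWmeas : AEStronglyMeasurable W μ := by
    apply AEStronglyMeasurable.mul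
    · exact (hκSM.mono hm).aestronglyMeasurable
    · exact hYm0.inner hVm
  have hfg_int : ∀ i : Fin d, Integrable (fun ω => κ ω * Y ω i * V ω i) μ := by
    intro i
    apply Integrable.mono' (integrable_const (B * c))
    · apply AEStronglyMeasurable.mul
      · exact ((hfSM i).mono hm).aestronglyMeasurable
      · exact ((EuclideanSpace.proj (𝕜 := ℝ) i).continuous.comp_aestronglyMeasurable hVm)
    · filter_upwards [hfb i, hVb] with ω h1 h2
      rw [Real.norm_eq_abs, abs_mul]
      have : |V ω i| ≤ c := le_trans (aux_abs_coord _ i) h2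
      exact mul_le_mul (by simpa [Real.norm_eq_abs, abs_mul] using h1) this (abs_nonneg _) hB0
  have hW_eq : W = fun ω => ∑ i : Fin d, κ ω * Y ω i * V ω i := by
    funext ω
    rw [hW]
    simp only [PiLp.inner_apply, RCLike.inner_apply, conj_trivial]
    rw [Finset.mul_sum]
    congr 1
    funext i
    ring
  have hW_int : Integrable W μ := by
    rw [hW_eq]
    exact integrable_finset_sum _ (fun i _ => hfg_int i)
  have hW0 : ∫ ω, W ω ∂μ = 0 := by
    rw [hW_eq]
    rw [integral_finset_sum _ (fun i _ => hfg_int i)]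
    simp [hzero]
  -- integrability of cosh terms
  have hcoshY_int : Integrable (fun ω => Real.cosh (lam * ‖Y ω‖)) μ := by
    apply Integrable.mono' (integrable_const (Real.cosh (lam * A)))
    · exact (Real.continuous_cosh.comp (continuous_const.mul continuous_norm)).comp_aestronglyMeasurable hYm0
    · filter_upwards [hYb] with ω hω
      rw [Real.norm_eq_abs, abs_of_pos (Real.cosh_pos _)]
      exact Real.cosh_le_cosh.2 (by
        rw [abs_of_nonneg (by positivity), abs_of_nonneg (by positivity)]
        exact mul_le_mul_of_nonneg_left hω hlam)
  have hcoshYV_int : Integrable (fun ω => Real.cosh (lam * ‖Y ω + V ω‖)) μ := by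
    apply Integrable.mono' (integrable_const (Real.cosh (lam * (A + c))))
    · exact (Real.continuous_cosh.comp (continuous_const.mul continuous_norm)).comp_aestronglyMeasurable
        (hYm0.add hVm)
    · filter_upwards [hYb, hVb] with ω h1 h2
      rw [Real.norm_eq_abs, abs_of_pos (Real.cosh_pos _)]
      exact Real.cosh_le_cosh.2 (by
        rw [abs_of_nonneg (by positivity), abs_of_nonneg (by positivity)]
        exact mul_le_mul_of_nonneg_left (le_trans (norm_add_le _ _) (by linarith)) hlam)
  -- pointwise bound
  have hpoint : ∀ᵐ ω ∂μ, Real.cosh (lam * ‖Y ω + V ω‖)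
      ≤ Real.cosh (lam * ‖Y ω‖) * Real.cosh (lam * c) + W ω := by
    filter_upwards [hVb] with ω hω
    exact aux_key_pointwise lam c hlam (Y ω) (V ω) hω
  -- put everything together
  have hrhs_int : Integrable (fun ω => Real.cosh (lam * ‖Y ω‖) * Real.cosh (lam * c) + W ω) μ :=
    (hcoshY_int.mul_const _).add hW_int
  calc ∫ ω, Real.cosh (lam * ‖Y ω + V ω‖) ∂μ
      ≤ ∫ ω, (Real.cosh (lam * ‖Y ω‖) * Real.cosh (lam * c) + W ω) ∂μ :=
        integral_mono_ae hcoshYV_int hrhs_int hpoint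
    _ = ∫ ω, Real.cosh (lam * ‖Y ω‖) * Real.cosh (lam * c) ∂μ + ∫ ω, W ω ∂μ :=
        integral_add (hcoshY_int.mul_const _) hW_int
    _ = Real.cosh (lam * c) * ∫ ω, Real.cosh (lam * ‖Y ω‖) ∂μ := by
        rw [hW0, add_zero, integral_mul_const]
        ring

set_option maxHeartbeats 1000000 in
theorem stmt17 {Ω : Type*} {m0 : MeasurableSpace Ω} {d : ℕ}
    (μ : Measure Ω) [IsProbabilityMeasure μ]
    (ℱ : Filtration ℕ m0)
    (X : ℕ → Ω → EuclideanSpace ℝ (Fin d))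
    (hadapted : Adapted ℱ X)
    (n : ℕ) (hn : 1 ≤ n) (R : ℝ)
    (hbound : ∀ t, ∀ᵐ ω ∂μ, ‖X t ω‖ ≤ 2 * R)
    (hmart : ∀ t, 1 ≤ t → μ[X t | ℱ (t - 1)] =ᵐ[μ] 0)
    (δ : ℝ) (hδ0 : 0 < δ) (hδ1 : δ < 1) :
    ENNReal.ofReal (1 - δ) ≤
      μ {ω | ‖(n : ℝ)⁻¹ • ∑ t ∈ Finset.Icc 1 n, X t ω‖ ≤
        4 * R * Real.sqrt (Real.log (2 / δ) / n)} := by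
  classical
  set thr := 4 * R * Real.sqrt (Real.log (2 / δ) / n) with hthr
  set P : Ω → Prop := fun ω => ‖(n : ℝ)⁻¹ • ∑ t ∈ Finset.Icc 1 n, X t ω‖ ≤ thr with hP
  -- it suffices to bound the measure of the complement
  suffices hbad : μ {ω | ¬ P ω} ≤ ENNReal.ofReal δ by
    have h2 : μ Set.univ ≤ μ {ω | P ω} + μ {ω | P ω}ᶜ := by
      rw [← Set.union_compl_self {ω | P ω}]
      exact measure_union_le _ _
    rw [measure_univ] at h2
    have h3 : μ {ω | P ω}ᶜ ≤ ENNReal.ofReal δ := by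
      rw [Set.compl_setOf]
      exact hbad
    have h4 : (1:ENNReal) ≤ μ {ω | P ω} + ENNReal.ofReal δ :=
      h2.trans (add_le_add_right h3 _)
    have h5 : ENNReal.ofReal (1 - δ) + ENNReal.ofReal δ = 1 := by
      rw [← ENNReal.ofReal_add (by linarith) hδ0.le]
      norm_num
    have h6 : ENNReal.ofReal (1 - δ) + ENNReal.ofReal δ
        ≤ μ {ω | P ω} + ENNReal.ofReal δ := by rw [h5]; exact h4
    exact (ENNReal.add_le_add_iff_right ENNReal.ofReal_ne_top).1 h6
  -- nonnegativity of R
  have hae : (ae μ).NeBot := ae_neBot.2 (IsProbabilityMeasure.ne_zero μ)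
  have hR0 : 0 ≤ R := by
    obtain ⟨ω, hω⟩ := (hbound 1).exists
    nlinarith [norm_nonneg (X 1 ω)]
  rcases eq_or_lt_of_le hR0 with hR | hR
  · -- R = 0 : everything is a.e. zero
    have hz : ∀ᵐ ω ∂μ, ∀ t, ‖X t ω‖ ≤ 0 := by
      rw [ae_all_iff]
      intro t
      filter_upwards [hbound t] with ω hω
      rw [← hR] at hω
      linarith
    have hgood : ∀ᵐ ω ∂μ, P ω := by
      filter_upwards [hz] with ω hω
      have hsum : ∑ t ∈ Finset.Icc 1 n, X t ω = 0 := by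
        apply Finset.sum_eq_zero
        intro t _
        exact norm_le_zero_iff.1 (hω t)
      rw [hP]
      simp only [hsum, smul_zero, norm_zero, hthr, ← hR]
      positivity
    rw [ae_iff] at hgood
    rw [hgood]
    exact zero_le
  · -- main case R > 0
    set c : ℝ := 2 * R with hc_def
    have hc : 0 < c := by positivity
    set L : ℝ := Real.log (2 / δ) with hL_def
    have hL : 0 < L := Real.log_pos (by rw [lt_div_iff₀ hδ0]; linarith)
    set sqn : ℝ := Real.sqrt n with hsqn_def
    set sqL : ℝ := Real.sqrt L with hsqL_def
    have hn0 : (0:ℝ) < n := by exact_mod_cast hn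
    have hsqn : 0 < sqn := Real.sqrt_pos.2 hn0
    have hsqL : 0 < sqL := Real.sqrt_pos.2 hL
    have hsqn2 : sqn * sqn = (n:ℝ) := Real.mul_self_sqrt hn0.le
    have hsqL2 : sqL * sqL = L := Real.mul_self_sqrt hL.le
    set lam : ℝ := sqn * sqL / (n * R) with hlam_def
    have hlam : 0 < lam := by positivity
    set r : ℝ := 4 * R * (sqn * sqL) with hr_def
    have hr : 0 < r := by positivity
    set S : ℕ → Ω → EuclideanSpace ℝ (Fin d) := fun k ω => ∑ t ∈ Finset.Icc 1 k, X t ω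
      with hS_def
    have hSSM : ∀ k, StronglyMeasurable[ℱ k] (S k) := by
      intro k
      apply Finset.stronglyMeasurable_fun_sum
      intro t ht
      exact ((hadapted t).mono (ℱ.mono (Finset.mem_Icc.1 ht).2) le_rfl).stronglyMeasurable
    have hSb : ∀ k, ∀ᵐ ω ∂μ, ‖S k ω‖ ≤ c * k := by
      intro k
      have hall : ∀ᵐ ω ∂μ, ∀ t, ‖X t ω‖ ≤ 2 * R := ae_all_iff.2 hbound
      filter_upwards [hall] with ω hω
      calc ‖S k ω‖ ≤ ∑ t ∈ Finset.Icc 1 k, ‖X t ω‖ := norm_sum_le _ _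
        _ ≤ ∑ t ∈ Finset.Icc 1 k, (2*R) := Finset.sum_le_sum (fun t _ => hω t)
        _ = c * k := by
            rw [Finset.sum_const, Nat.card_Icc]
            simp [hc_def]
            ring
    -- the inductive bound
    have hind : ∀ k : ℕ, ∫ ω, Real.cosh (lam * ‖S k ω‖) ∂μ ≤ Real.cosh (lam * c) ^ k := by
      intro k
      induction k with
      | zero =>
          have : ∀ ω, Real.cosh (lam * ‖S 0 ω‖) = 1 := by
            intro ω
            simp [hS_def]
          rw [integral_congr_ae (Filter.Eventually.of_forall this)]
          simp
      | succ k ih =>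
          have hsplit : ∀ ω, S (k+1) ω = S k ω + X (k+1) ω := by
            intro ω
            rw [hS_def]
            exact Finset.sum_Icc_succ_top (Nat.succ_le_succ (Nat.zero_le k)) _
          have hmart' : μ[X (k+1) | ℱ k] =ᵐ[μ] 0 := by
            have := hmart (k+1) (Nat.succ_le_succ (Nat.zero_le k))
            simpa using this
          have hstep := aux_step (ℱ.le k) μ (S k) (X (k+1)) (hSSM k)
            ((hadapted (k+1)).mono (ℱ.le _) le_rfl).aestronglyMeasurable
            lam c (c * k) hlam.le hc (by positivity) (hSb k) (hbound (k+1)) hmart'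
          have heq : ∫ ω, Real.cosh (lam * ‖S (k+1) ω‖) ∂μ
              = ∫ ω, Real.cosh (lam * ‖S k ω + X (k+1) ω‖) ∂μ := by
            apply integral_congr_ae
            apply Filter.Eventually.of_forall
            intro ω
            simp only [hsplit]
          rw [heq]
          calc ∫ ω, Real.cosh (lam * ‖S k ω + X (k+1) ω‖) ∂μ
              ≤ Real.cosh (lam * c) * ∫ ω, Real.cosh (lam * ‖S k ω‖) ∂μ := hstep
            _ ≤ Real.cosh (lam * c) * Real.cosh (lam * c) ^ k :=
                mul_le_mul_of_nonneg_left ih (Real.cosh_pos _).le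
            _ = Real.cosh (lam * c) ^ (k+1) := by ring
    -- Markov inequality
    set f : Ω → ℝ := fun ω => Real.cosh (lam * ‖S n ω‖) with hf_def
    have hf_nonneg : 0 ≤ᵐ[μ] f := Filter.Eventually.of_forall (fun ω => (Real.cosh_pos _).le)
    have hf_meas : AEStronglyMeasurable f μ := by
      apply Continuous.comp_aestronglyMeasurable
        (Real.continuous_cosh.comp (continuous_const.mul continuous_norm))
      exact ((hSSM n).mono (ℱ.le n)).aestronglyMeasurable
    have hf_int : Integrable f μ := by
      apply Integrable.mono' (integrable_const (Real.cosh (lam * (c * n)))) hf_meas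
      filter_upwards [hSb n] with ω hω
      rw [Real.norm_eq_abs, abs_of_pos (Real.cosh_pos _)]
      apply Real.cosh_le_cosh.2
      rw [abs_of_nonneg (by positivity), abs_of_nonneg (by positivity)]
      exact mul_le_mul_of_nonneg_left hω hlam.le
    have hmar := mul_meas_ge_le_integral_of_nonneg hf_nonneg hf_int (Real.cosh (lam * r))
    -- numerical facts
    have hlamc : lam * c = 2 * (sqn * sqL) / n := by
      rw [hlam_def, hc_def]
      field_simp
    have hlamr : lam * r = 4 * L := by
      rw [hlam_def, hr_def]
      field_simp
      linear_combination (sqL*sqL) * hsqn2 + (n:ℝ) * hsqL2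
    have hnlc : (n:ℝ) * ((lam * c) ^ 2 / 2) = 2 * L := by
      rw [hlamc]
      field_simp
      linear_combination (sqL*sqL) * hsqn2 + (n:ℝ) * hsqL2
    have hexpL : Real.exp L = 2 / δ := Real.exp_log (by positivity)
    -- ∫ f ≤ δ cosh (lam r)
    have hkey : ∫ ω, f ω ∂μ ≤ δ * Real.cosh (lam * r) := by
      have h1 : ∫ ω, f ω ∂μ ≤ Real.cosh (lam * c) ^ n := hind n
      have h2 : Real.cosh (lam * c) ^ n ≤ Real.exp ((lam * c) ^ 2 / 2) ^ n :=
        pow_le_pow_left₀ (Real.cosh_pos _).le (aux_cosh_le_exp_sq _) n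
      have h3 : Real.exp ((lam * c) ^ 2 / 2) ^ n = Real.exp (2 * L) := by
        rw [← Real.exp_nat_mul, hnlc]
      have h4 : Real.exp (2 * L) = (2/δ)^2 := by
        rw [two_mul, Real.exp_add, hexpL]
        ring
      have h5 : Real.exp (lam * r) = (2/δ)^4 := by
        rw [hlamr, show (4:ℝ) * L = L + L + L + L by ring, Real.exp_add, Real.exp_add,
          Real.exp_add, hexpL]
        ring
      have h6 : Real.exp (lam * r) / 2 ≤ Real.cosh (lam * r) := by
        rw [Real.cosh_eq]
        have := Real.exp_pos (-(lam * r))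
        linarith
      have h7 : (2/δ)^2 ≤ δ * ((2/δ)^4 / 2) := by
        have hh : ∀ x : ℝ, 0 < x → x < 1 → (2/x)^2 ≤ x * ((2/x)^4 / 2) := by
          intro x hx0 hx1
          have e1 : (2/x)^2 = 4/x^2 := by rw [div_pow]; norm_num
          have e2 : x * ((2/x)^4/2) = 8/x^3 := by rw [div_pow]; field_simp; ring
          rw [e1, e2, div_le_div_iff₀ (by positivity) (by positivity)]
          nlinarith [sq_nonneg x]
        exact hh δ hδ0 hδ1
      calc ∫ ω, f ω ∂μ ≤ Real.exp (2 * L) := by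
            rw [← h3]; exact h1.trans h2
        _ = (2/δ)^2 := h4
        _ ≤ δ * ((2/δ)^4 / 2) := h7
        _ = δ * (Real.exp (lam * r) / 2) := by rw [h5]
        _ ≤ δ * Real.cosh (lam * r) := by
            apply mul_le_mul_of_nonneg_left h6 hδ0.le
    -- measure bound
    have hmeasr : (μ {ω | Real.cosh (lam * r) ≤ f ω}).toReal ≤ δ := by
      have hcr : 0 < Real.cosh (lam * r) := Real.cosh_pos _
      have h8 : Real.cosh (lam * r) * (μ {ω | Real.cosh (lam * r) ≤ f ω}).toReal
          ≤ Real.cosh (lam * r) * δ := by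
        refine hmar.trans (hkey.trans (le_of_eq ?_))
        ring
      exact le_of_mul_le_mul_left h8 hcr
    have hsubset : {ω | ¬ P ω} ⊆ {ω | Real.cosh (lam * r) ≤ f ω} := by
      intro ω hω
      simp only [Set.mem_setOf_eq, hP, not_le] at hω
      simp only [Set.mem_setOf_eq, hf_def]
      have hnorm : ‖(n : ℝ)⁻¹ • S n ω‖ = (n:ℝ)⁻¹ * ‖S n ω‖ := by
        rw [norm_smul, Real.norm_eq_abs, abs_of_pos (by positivity)]
      rw [hnorm] at hω
      have hthr_r : (n:ℝ) * thr = r := by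
        rw [hthr, hr_def, Real.sqrt_div hL.le, ← hsqn_def, ← hsqL_def]
        field_simp
        linear_combination (-1:ℝ) * hsqn2
      have hrS : r < ‖S n ω‖ := by
        have h9 : (n:ℝ) * ((n:ℝ)⁻¹ * ‖S n ω‖) = ‖S n ω‖ := by
          field_simp
        calc r = (n:ℝ) * thr := hthr_r.symm
          _ < (n:ℝ) * ((n:ℝ)⁻¹ * ‖S n ω‖) := by
              exact (mul_lt_mul_iff_right₀ hn0).2 hω
          _ = ‖S n ω‖ := h9
      apply Real.cosh_le_cosh.2
      rw [abs_of_nonneg (by positivity), abs_of_nonneg (by positivity)]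
      exact mul_le_mul_of_nonneg_left hrS.le hlam.le
    calc μ {ω | ¬ P ω} ≤ μ {ω | Real.cosh (lam * r) ≤ f ω} := measure_mono hsubset
      _ ≤ ENNReal.ofReal δ := by
          rw [ENNReal.le_ofReal_iff_toReal_le (measure_ne_top μ _) hδ0.le]
          exact hmeasr
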